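/- Let K be a field and a ∈ K[h,h⁻¹] a nonzero Laurent polynomial which is not a monomial, with support {i₁ < i₂ < … < i_m} (m ≥ 2), degree d = i_m, and t = gcd(d−i₁, …, d−i_{m−1}). If α, c ∈ K* satisfy a(αh) = c·a(h) as Laurent polynomials, then α^t = 1 and c = α^d. -/

import Mathlib

lemma zpow_gcd_eq_one {K : Type*} [Field K] (α : K) (hα : α ≠ 0) {x y : ℤ}
    (hx : α ^ x = 1) (hy : α ^ y = 1) : α ^ (gcd x y) = 1 := by
  have h1 : gcd x y = (Int.gcd x y : ℤ) := (Int.coe_gcd x y).symm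
  have h2 : (Int.gcd x y : ℤ) = x * Int.gcdA x y + y * Int.gcdB x y :=
    Int.gcd_eq_gcd_ab x y
  rw [h1, h2, zpow_add₀ hα, zpow_mul, zpow_mul, hx, hy, one_zpow, one_zpow, one_mul]

lemma zpow_finset_gcd_eq_one {K : Type*} [Field K] (α : K) (hα : α ≠ 0)
    (s : Finset ℤ) (f : ℤ → ℤ) (hf : ∀ i ∈ s, α ^ (f i) = 1) :
    α ^ (s.gcd f) = 1 := by
  induction s using Finset.induction_on with
  | empty => simp
  | insert x s hx ih =>
    rw [Finset.gcd_insert]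
    exact zpow_gcd_eq_one α hα (hf _ (Finset.mem_insert_self _ _))
      (ih fun i hi => hf i (Finset.mem_insert_of_mem hi))

/-- A Laurent polynomial `a = Σ aᵢ hⁱ` over a field `K` is encoded as the finitely
supported function `a : ℤ →₀ K` of its coefficients.  Suppose `a` is not a monomial
(its support has at least two elements), let `d` be its degree (the maximum of the
support) and `t` the gcd of the differences `d - i` over the support.  If
`α, c ∈ K*` satisfy `a(αh) = c·a(h)` (coefficientwise: `aᵢ αⁱ = c aᵢ` for all `i`),
then `α^t = 1` and `c = α^d`. -/
theorem stmt_3 (K : Type*) [Field K] (a : ℤ →₀ K)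
    (hcard : 2 ≤ a.support.card)
    (α c : K) (hα : α ≠ 0) (hc : c ≠ 0)
    (h : ∀ i : ℤ, a i * α ^ i = c * a i) :
    α ^ (a.support.gcd fun i =>
        a.support.max' (Finset.card_pos.mp (by omega)) - i) = 1 ∧
      c = α ^ (a.support.max' (Finset.card_pos.mp (by omega))) := by
  set d := a.support.max' (Finset.card_pos.mp (by omega)) with hd
  have key : ∀ i ∈ a.support, α ^ i = c := by
    intro i hi
    have hai : a i ≠ 0 := Finsupp.mem_support_iff.mp hi
    have h2 : a i * α ^ i = a i * c := by rw [h i, mul_comm]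
    exact mul_left_cancel₀ hai h2
  have hdmem : d ∈ a.support := a.support.max'_mem _
  have hcd : c = α ^ d := (key d hdmem).symm
  refine ⟨?_, hcd⟩
  apply zpow_finset_gcd_eq_one α hα
  intro i hi
  rw [zpow_sub₀ hα, key i hi, ← hcd, div_self hc]
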